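/- In the anti-coordination game, for any Nash equilibrium x*, the fraction z* = z(x*) of players playing +1 satisfies G_a((n/(n−1))(z* − ε)) ≥ z* ≥ G_a((n/(n−1))z*) for every ε ∈ (1/n, 2/n]. Conversely, for any z* ∈ {0, 1/n, …, 1} satisfying these inequalities there exists a Nash equilibrium x* with z(x*) = z*. -/

import Mathlib

open Finset

/-- Anti-coordination game utility, with weights d_i = 2(n−1)(r_i − 1/2). -/
noncomputable def antiCoordU {n : ℕ} (r : Fin n → ℝ) (i : Fin n) (x : Fin n → ℝ) : ℝ :=
  -(∑ j ∈ Finset.univ.erase i, x i * x j - (2 * ((n : ℝ) - 1) * (r i - 1/2)) * x i)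

/-- Threshold CCDF. -/
noncomputable def Ga {n : ℕ} (r : Fin n → ℝ) (z : ℝ) : ℝ :=
  ({i : Fin n | r i > z}.ncard : ℝ) / n

/-- Fraction of players at +1. -/
noncomputable def zfrac (n : ℕ) (x : Fin n → ℝ) : ℝ :=
  ({i : Fin n | x i = 1}.ncard : ℝ) / n

lemma uform {n : ℕ} (r : Fin n → ℝ) (i : Fin n) (x : Fin n → ℝ) :
    antiCoordU r i x
      = -(x i * ((∑ j, x j) - x i) - (2 * ((n : ℝ) - 1) * (r i - 1/2)) * x i) := by
  unfold antiCoordU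
  rw [← Finset.mul_sum, Finset.sum_erase_eq_sub (Finset.mem_univ i)]

lemma uupdate {n : ℕ} (r : Fin n → ℝ) (i : Fin n) (x : Fin n → ℝ) (y : ℝ) :
    antiCoordU r i (Function.update x i y)
      = -(y * ((∑ j, x j) - x i) - (2 * ((n : ℝ) - 1) * (r i - 1/2)) * y) := by
  rw [uform, Finset.sum_update_of_mem (Finset.mem_univ i), Function.update_self,
    Finset.sdiff_singleton_eq_erase, Finset.sum_erase_eq_sub (Finset.mem_univ i)]
  ring

lemma nash_iff {n : ℕ} (r : Fin n → ℝ) (x : Fin n → ℝ) (hx : ∀ i, x i = 1 ∨ x i = -1) :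
    (∀ (i : Fin n) (y : ℝ), (y = 1 ∨ y = -1) →
        antiCoordU r i (Function.update x i y) ≤ antiCoordU r i x)
    ↔ ∀ i, x i * ((∑ j, x j) - x i - (2 * ((n : ℝ) - 1) * (r i - 1/2))) ≤ 0 := by
  constructor
  · intro h i
    have h2 := h i (-(x i)) (by rcases hx i with h1 | h1 <;> simp [h1])
    rw [uupdate, uform] at h2
    nlinarith [h2]
  · intro h i y hy
    rw [uupdate, uform]
    have hi := h i
    rcases hx i with h1 | h1 <;> rcases hy with h2 | h2 <;> rw [h1] at hi ⊢ <;>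
      rw [h2] <;> nlinarith [hi]

lemma sum_pm {n : ℕ} (x : Fin n → ℝ) [DecidablePred (fun i => x i = 1)]
    (hx : ∀ i, x i = 1 ∨ x i = -1) :
    ∑ j, x j = 2 * ((Finset.univ.filter (fun i => x i = 1)).card : ℝ) - n := by
  rw [← Finset.sum_filter_add_sum_filter_not Finset.univ (fun i => x i = 1)]
  rw [Finset.sum_congr rfl (fun i hi => (Finset.mem_filter.mp hi).2),
    Finset.sum_congr rfl (g := fun _ => (-1 : ℝ))
      (fun i hi => (hx i).resolve_left (Finset.mem_filter.mp hi).2)]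
  simp only [Finset.sum_const, nsmul_eq_mul, mul_one, mul_neg_one]
  have := Finset.card_filter_add_card_filter_not (s := (Finset.univ : Finset (Fin n)))
    (p := fun i => x i = 1)
  simp only [Finset.card_univ, Fintype.card_fin] at this
  have h2 : ((Finset.univ.filter (fun i => ¬ x i = 1)).card : ℝ)
      = n - ((Finset.univ.filter (fun i => x i = 1)).card : ℝ) := by
    push_cast [← this]; ring
  rw [h2]; ring

lemma ncard_eq {n : ℕ} (p : Fin n → Prop) [DecidablePred p] :
    {i : Fin n | p i}.ncard = (Finset.univ.filter p).card := by
  rw [Set.ncard_eq_toFinset_card']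
  congr 1
  ext i
  simp

lemma Ga_eq {n : ℕ} (r : Fin n → ℝ) (z : ℝ) [DecidablePred (fun i => r i > z)] :
    Ga r z = ((Finset.univ.filter (fun i => r i > z)).card : ℝ) / n := by
  unfold Ga
  rw [ncard_eq]

lemma zfrac_eq {n : ℕ} (x : Fin n → ℝ) [DecidablePred (fun i => x i = 1)] :
    zfrac n x = ((Finset.univ.filter (fun i => x i = 1)).card : ℝ) / n := by
  unfold zfrac
  rw [ncard_eq]

set_option maxHeartbeats 1600000

/-- Nash equilibria of the anti-coordination game correspond exactly to the
fractions z* ∈ {0,1/n,…,1} with G_a((n/(n−1))(z*−ε)) ≥ z* ≥ G_a((n/(n−1))z*)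
for all ε ∈ (1/n, 2/n]. -/
theorem antiCoord_nash_fraction_characterization {n : ℕ} (hn : 2 ≤ n) (r : Fin n → ℝ) :
    (∀ x : Fin n → ℝ, (∀ i, x i = 1 ∨ x i = -1) →
      (∀ (i : Fin n) (y : ℝ), (y = 1 ∨ y = -1) →
        antiCoordU r i (Function.update x i y) ≤ antiCoordU r i x) →
      ∀ ε : ℝ, 1 / (n : ℝ) < ε → ε ≤ 2 / (n : ℝ) →
        Ga r (((n : ℝ) / ((n : ℝ) - 1)) * (zfrac n x - ε)) ≥ zfrac n x ∧
        zfrac n x ≥ Ga r (((n : ℝ) / ((n : ℝ) - 1)) * zfrac n x)) ∧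
    (∀ k : ℕ, k ≤ n →
      (∀ ε : ℝ, 1 / (n : ℝ) < ε → ε ≤ 2 / (n : ℝ) →
        Ga r (((n : ℝ) / ((n : ℝ) - 1)) * ((k : ℝ) / n - ε)) ≥ (k : ℝ) / n ∧
        (k : ℝ) / n ≥ Ga r (((n : ℝ) / ((n : ℝ) - 1)) * ((k : ℝ) / n))) →
      ∃ x : Fin n → ℝ, (∀ i, x i = 1 ∨ x i = -1) ∧
        (∀ (i : Fin n) (y : ℝ), (y = 1 ∨ y = -1) →
          antiCoordU r i (Function.update x i y) ≤ antiCoordU r i x) ∧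
        zfrac n x = (k : ℝ) / n) := by
  classical
  have hn0 : (0 : ℝ) < n := by
    have : (0:ℕ) < n := by omega
    exact_mod_cast this
  have hn1 : (0 : ℝ) < (n : ℝ) - 1 := by
    have : (1:ℕ) < n := by omega
    have : (1:ℝ) < n := by exact_mod_cast this
    linarith
  constructor
  · -- forward direction
    intro x hx hnash ε hε1 hε2
    set P := Finset.univ.filter (fun i => x i = 1) with hP
    set k := P.card with hkdef
    have hzf : zfrac n x = (k : ℝ) / n := zfrac_eq x
    have hS : ∑ j, x j = 2 * (k : ℝ) - n := sum_pm x hx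
    have hnash' := (nash_iff r x hx).mp hnash
    have hpos : ∀ i, x i = 1 → (k : ℝ) - 1 ≤ ((n : ℝ) - 1) * r i := by
      intro i hi
      have h3 := hnash' i
      rw [hi, hS] at h3
      nlinarith [h3]
    have hneg : ∀ i, x i = -1 → ((n : ℝ) - 1) * r i ≤ (k : ℝ) := by
      intro i hi
      have h3 := hnash' i
      rw [hi, hS] at h3
      nlinarith [h3]
    rw [hzf]
    constructor
    · rw [Ga_eq, ge_iff_le]
      have hsub : P ⊆ Finset.univ.filter
          (fun i => r i > ((n : ℝ) / ((n : ℝ) - 1)) * ((k : ℝ) / n - ε)) := by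
        intro i hi
        simp only [hP, Finset.mem_filter, Finset.mem_univ, true_and] at hi ⊢
        have h1 := hpos i hi
        have h2 : 1 < ε * n := (div_lt_iff₀ hn0).mp hε1
        rw [gt_iff_lt, div_mul_eq_mul_div, div_lt_iff₀ hn1]
        have h4 : (n : ℝ) * ((k : ℝ) / n - ε) = (k : ℝ) - ε * n := by
          field_simp
        rw [h4]
        nlinarith
      have hcard := Finset.card_le_card hsub
      have : (k : ℝ) ≤ ((Finset.univ.filter
          (fun i => r i > ((n : ℝ) / ((n : ℝ) - 1)) * ((k : ℝ) / n - ε))).card : ℝ) := by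
        exact_mod_cast hcard
      exact (div_le_div_iff_of_pos_right hn0).mpr this
    · have heq : ((n : ℝ) / ((n : ℝ) - 1)) * ((k : ℝ) / n) = (k : ℝ) / ((n : ℝ) - 1) := by
        field_simp
      rw [heq, Ga_eq, ge_iff_le]
      have hsub : Finset.univ.filter (fun i => r i > (k : ℝ) / ((n : ℝ) - 1)) ⊆ P := by
        intro i hi
        simp only [Finset.mem_filter, Finset.mem_univ, true_and] at hi
        simp only [hP, Finset.mem_filter, Finset.mem_univ, true_and]
        rcases hx i with h1 | h1
        · exact h1
        · exfalso
          have h2 := hneg i h1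
          have h3 : (k : ℝ) < r i * ((n : ℝ) - 1) := (div_lt_iff₀ hn1).mp hi
          nlinarith
      have hcard := Finset.card_le_card hsub
      have : ((Finset.univ.filter (fun i => r i > (k : ℝ) / ((n : ℝ) - 1))).card : ℝ)
          ≤ (k : ℝ) := by exact_mod_cast hcard
      exact (div_le_div_iff_of_pos_right hn0).mpr this
  · -- converse direction
    intro k hk hH
    set c : ℝ := ((k : ℝ) - 1) / ((n : ℝ) - 1) with hc
    set F := Finset.univ.filter (fun i => r i < c) with hF
    set s : Finset ℝ := insert (((k : ℝ) - 2) / ((n : ℝ) - 1)) (F.image r) with hs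
    have hsne : s.Nonempty := Finset.insert_nonempty _ _
    set m : ℝ := s.max' hsne with hm
    have hmc : m < c := by
      rw [hm, Finset.max'_lt_iff]
      intro b hb
      rw [hs, Finset.mem_insert] at hb
      rcases hb with hb | hb
      · rw [hb, hc]
        rw [div_lt_div_iff_of_pos_right hn1]
        linarith
      · obtain ⟨i, hi, rfl⟩ := Finset.mem_image.mp hb
        exact (Finset.mem_filter.mp hi).2
    set t : ℝ := (m + c) / 2 with ht
    have hmt : m < t := by rw [ht]; linarith
    have htc : t < c := by rw [ht]; linarith
    have ht2 : ((k : ℝ) - 2) / ((n : ℝ) - 1) < t :=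
      lt_of_le_of_lt (Finset.le_max' s _ (Finset.mem_insert_self _ _)) hmt
    set ε : ℝ := (k : ℝ) / n - ((n : ℝ) - 1) / n * t with hεdef
    have hεt : ((n : ℝ) / ((n : ℝ) - 1)) * ((k : ℝ) / n - ε) = t := by
      rw [hεdef]
      field_simp
      ring
    have htk1 : t * ((n : ℝ) - 1) < (k : ℝ) - 1 := (lt_div_iff₀ hn1).mp htc
    have htk2 : (k : ℝ) - 2 < t * ((n : ℝ) - 1) := (div_lt_iff₀ hn1).mp ht2
    have hε1 : 1 / (n : ℝ) < ε := by
      rw [hεdef]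
      rw [div_lt_iff₀ hn0]
      have : ((k : ℝ) / n - ((n : ℝ) - 1) / n * t) * n = (k : ℝ) - t * ((n : ℝ) - 1) := by
        field_simp
      rw [this]
      linarith
    have hε2 : ε ≤ 2 / (n : ℝ) := by
      rw [hεdef]
      rw [← sub_nonneg]
      have : 2 / (n : ℝ) - ((k : ℝ) / n - ((n : ℝ) - 1) / n * t)
          = (2 - ((k : ℝ) - t * ((n : ℝ) - 1))) / n := by
        field_simp
      rw [this]
      apply div_nonneg _ (le_of_lt hn0)
      linarith
    obtain ⟨hGa1, hGa2⟩ := hH ε hε1 hε2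
    rw [hεt] at hGa1
    -- B = players with r i ≥ c
    set B := Finset.univ.filter (fun i => c ≤ r i) with hB
    have hfilterB : Finset.univ.filter (fun i => r i > t) = B := by
      ext i
      simp only [hB, Finset.mem_filter, Finset.mem_univ, true_and]
      constructor
      · intro h1
        by_contra h2
        push_neg at h2
        have hiF : i ∈ F := by
          rw [hF]; simp only [Finset.mem_filter, Finset.mem_univ, true_and]; exact h2
        have : r i ≤ m := Finset.le_max' s _ (by
          rw [hs]
          exact Finset.mem_insert_of_mem (Finset.mem_image_of_mem r hiF))
        linarith
      · intro h1
        exact lt_of_lt_of_le htc h1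
    have hBk : k ≤ B.card := by
      rw [Ga_eq, hfilterB, ge_iff_le] at hGa1
      exact Nat.cast_le.mp ((div_le_div_iff_of_pos_right hn0).mp hGa1)
    -- A = players with r i > k/(n-1)
    set A := Finset.univ.filter (fun i => r i > (k : ℝ) / ((n : ℝ) - 1)) with hA
    have hAk : A.card ≤ k := by
      have heq : ((n : ℝ) / ((n : ℝ) - 1)) * ((k : ℝ) / n) = (k : ℝ) / ((n : ℝ) - 1) := by
        field_simp
      rw [heq, Ga_eq, ge_iff_le] at hGa2
      exact Nat.cast_le.mp ((div_le_div_iff_of_pos_right hn0).mp hGa2)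
    have hAB : A ⊆ B := by
      intro i hi
      simp only [hA, Finset.mem_filter, Finset.mem_univ, true_and] at hi
      simp only [hB, Finset.mem_filter, Finset.mem_univ, true_and]
      have h1 : (k : ℝ) / ((n : ℝ) - 1) < r i := hi
      have h2 : c ≤ (k : ℝ) / ((n : ℝ) - 1) := by
        rw [hc]
        rw [div_le_div_iff_of_pos_right hn1]
        linarith
      linarith
    obtain ⟨C, hAC, hCB, hCcard⟩ := Finset.exists_subsuperset_card_eq hAB
      hAk hBk
    have hCk : C.card = k := by omega
    refine ⟨fun i => if i ∈ C then (1 : ℝ) else -1, fun i => ?_, ?_, ?_⟩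
    · by_cases h : i ∈ C <;> simp [h]
    · -- Nash property
      set x : Fin n → ℝ := fun i => if i ∈ C then (1 : ℝ) else -1 with hxdef
      have hx : ∀ i, x i = 1 ∨ x i = -1 := fun i => by
        by_cases h : i ∈ C <;> simp [hxdef, h] <;> norm_num
      rw [nash_iff r x hx]
      have hfil : Finset.univ.filter (fun i => x i = 1) = C := by
        ext i
        simp only [Finset.mem_filter, Finset.mem_univ, true_and, hxdef]
        by_cases h : i ∈ C <;> simp [h] <;> norm_num
      have hS : ∑ j, x j = 2 * (k : ℝ) - n := by
        rw [sum_pm x hx, hfil, hCk]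
      intro i
      rw [hS]
      by_cases h : i ∈ C
      · have hxi : x i = 1 := by simp [hxdef, h]
        rw [hxi]
        have h1 : c ≤ r i := by
          have := hCB h
          simp only [hB, Finset.mem_filter, Finset.mem_univ, true_and] at this
          exact this
        have h2 : (k : ℝ) - 1 ≤ r i * ((n : ℝ) - 1) := (div_le_iff₀ hn1).mp h1
        nlinarith
      · have hxi : x i = -1 := by simp [hxdef, h]
        rw [hxi]
        have hiA : i ∉ A := fun hiA => h (hAC hiA)
        simp only [hA, Finset.mem_filter, Finset.mem_univ, true_and, not_lt, gt_iff_lt] at hiA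
        have h2 : r i * ((n : ℝ) - 1) ≤ (k : ℝ) := (le_div_iff₀ hn1).mp hiA
        nlinarith
    · -- zfrac
      rw [zfrac_eq]
      congr 2
      have hfil : Finset.univ.filter (fun i => (if i ∈ C then (1:ℝ) else -1) = 1) = C := by
        ext i
        simp only [Finset.mem_filter, Finset.mem_univ, true_and]
        by_cases h : i ∈ C <;> simp [h] <;> norm_num
      rw [hfil, hCk]
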